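/- Let X be a Banach space with a 1-unconditional basis, and let D: X → X be a bounded diagonal operator with diagonal entries (λ_n), Λ = sup_n |λ_n| > 0. Suppose that for every ε > 0, every block subspace of X contains a further block subspace [y_m] and a scalar α_ε with |α_ε| ≤ Λ such that ‖(D − α_ε·Id)|_{[y_m]}‖ < ε. Then there exist a scalar α_0 and an infinite-dimensional block subspace Y_0 of X such that (D − α_0·Id)|_{Y_0} is a compact operator. -/

import Mathlib

open scoped BigOperators Classical
open Filter Topology

structure RealSchauderBasis (X : Type*) [NormedAddCommGroup X] [NormedSpace ℝ X] where
  e : ℕ → X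
  coord : ℕ → X →L[ℝ] ℝ
  ortho : ∀ i j, coord i (e j) = if i = j then 1 else 0
  expansion : ∀ x : X, HasSum (fun i => coord i x • e i) x

section Defs

variable {X : Type*} [NormedAddCommGroup X] [NormedSpace ℝ X]

def RealSchauderBasis.IsUnconditionalWith (b : RealSchauderBasis X) (C : ℝ) : Prop :=
  ∀ x y : X, (∀ i, |b.coord i y| ≤ |b.coord i x|) → ‖y‖ ≤ C * ‖x‖

def RealSchauderBasis.supp (b : RealSchauderBasis X) (x : X) : Set ℕ := {i | b.coord i x ≠ 0}

def StrictlySingular {E F : Type*} [NormedAddCommGroup E] [NormedSpace ℝ E]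
    [NormedAddCommGroup F] [NormedSpace ℝ F] (T : E →L[ℝ] F) : Prop :=
  ∀ Y : Submodule ℝ E, ¬ FiniteDimensional ℝ Y →
    ¬ ∃ c : ℝ, 0 < c ∧ ∀ y ∈ Y, c * ‖y‖ ≤ ‖T y‖

def RealSchauderBasis.TightBySupport (b : RealSchauderBasis X) : Prop :=
  ∀ Y Z : Submodule ℝ X, IsClosed (Y : Set X) → IsClosed (Z : Set X) →
    ¬ FiniteDimensional ℝ Y → ¬ FiniteDimensional ℝ Z →
    (∀ y ∈ Y, ∀ z ∈ Z, ∀ i, b.coord i y ≠ 0 → b.coord i z = 0) →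
    IsEmpty (Y ≃L[ℝ] Z)

def RealSchauderBasis.IsBlockSequence (b : RealSchauderBasis X) (x : ℕ → X) : Prop :=
  (∀ n, x n ≠ 0) ∧ (∀ n, (b.supp (x n)).Finite) ∧
    ∀ m n i j, m < n → b.coord i (x m) ≠ 0 → b.coord j (x n) ≠ 0 → i < j

def closedSpan (x : ℕ → X) : Submodule ℝ X :=
  (Submodule.span ℝ (Set.range x)).topologicalClosure

def RealSchauderBasis.IsDiagonal (b : RealSchauderBasis X) (D : X →L[ℝ] X) : Prop :=
  ∀ i, ∃ lam : ℝ, D (b.e i) = lam • b.e i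

def IsL1Average (b : RealSchauderBasis X) (x : X) (n : ℕ) (c : ℝ) : Prop :=
  0 < n ∧ 1 ≤ c ∧ ∃ xs : Fin n → X,
    (∀ i, ‖xs i‖ ≤ 1) ∧
    (∀ i j : Fin n, i < j → ∀ p q, b.coord p (xs i) ≠ 0 → b.coord q (xs j) ≠ 0 → p < q) ∧
    x = (n : ℝ)⁻¹ • ∑ i, xs i ∧ 1 / c ≤ ‖x‖

end Defs

section Aux

variable {X : Type*} [NormedAddCommGroup X] [NormedSpace ℝ X] (b : RealSchauderBasis X)

lemma aux_eq_zero {x : X} (h : ∀ i, b.coord i x = 0) : x = 0 := by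
  have h2 := b.expansion x
  have : (fun i => b.coord i x • b.e i) = fun _ => (0 : X) := by
    funext i; rw [h i, zero_smul]
  rw [this] at h2
  exact h2.unique hasSum_zero

lemma aux_fin_expansion {x : X} (s : Finset ℕ) (hs : ∀ i ∉ s, b.coord i x = 0) :
    ∑ i ∈ s, b.coord i x • b.e i = x := by
  refine HasSum.unique ?_ (b.expansion x)
  exact hasSum_sum_of_ne_finset_zero (fun i hi => by rw [hs i hi, zero_smul])

noncomputable def QN (N : ℕ) : X →L[ℝ] X :=
  ∑ i ∈ Finset.range N, (b.coord i).smulRight (b.e i)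

lemma QN_apply (N : ℕ) (x : X) : QN b N x = ∑ i ∈ Finset.range N, b.coord i x • b.e i := by
  simp [QN, ContinuousLinearMap.sum_apply]

lemma coord_QN (N : ℕ) (x : X) (i : ℕ) :
    b.coord i (QN b N x) = if i ∈ Finset.range N then b.coord i x else 0 := by
  rw [QN_apply, map_sum]
  have : ∀ j ∈ Finset.range N, b.coord i (b.coord j x • b.e j)
      = if j = i then b.coord i x else 0 := by
    intro j _
    rw [map_smul, b.ortho i j, smul_eq_mul]
    by_cases h : j = i
    · simp [h]
    · simp [h, Ne.symm h]
  rw [Finset.sum_congr rfl this, Finset.sum_ite_eq']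

lemma QN_norm_le (hb : b.IsUnconditionalWith 1) (N : ℕ) (x : X) : ‖QN b N x‖ ≤ ‖x‖ := by
  have := hb x (QN b N x) (fun i => by
    rw [coord_QN]
    split <;> simp [abs_nonneg])
  linarith
lemma QN_tail_norm_le (hb : b.IsUnconditionalWith 1) (N : ℕ) (x : X) :
    ‖x - QN b N x‖ ≤ ‖x‖ := by
  have := hb x (x - QN b N x) (fun i => by
    rw [map_sub, coord_QN]
    split <;> simp [abs_nonneg])
  linarith

lemma QN_eq_self {N : ℕ} {x : X} (h : ∀ i, b.coord i x ≠ 0 → i < N) : QN b N x = x := by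
  rw [QN_apply]
  exact aux_fin_expansion b _ (fun i hi => by
    by_contra hne
    exact hi (Finset.mem_range.2 (h i hne)))

lemma QN_eq_zero {N : ℕ} {x : X} (h : ∀ i, i < N → b.coord i x = 0) : QN b N x = 0 := by
  rw [QN_apply]
  refine Finset.sum_eq_zero (fun i hi => ?_)
  rw [h i (Finset.mem_range.1 hi), zero_smul]

end Aux

section Aux2

variable {X : Type*} [NormedAddCommGroup X] [NormedSpace ℝ X] (b : RealSchauderBasis X)

lemma aux_exists_coord_ne {x : X} (hx : x ≠ 0) : ∃ i, b.coord i x ≠ 0 := by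
  by_contra h
  push_neg at h
  exact hx (aux_eq_zero b h)

lemma aux_e_block : b.IsBlockSequence b.e := by
  refine ⟨fun n hn => ?_, fun n => ?_, fun m n i j hmn hi hj => ?_⟩
  · have := b.ortho n n
    rw [hn] at this
    simp at this
  · have : b.supp (b.e n) ⊆ {n} := by
      intro i hi
      by_contra hne
      simp only [Set.mem_singleton_iff] at hne
      exact (hi : b.coord i (b.e n) ≠ 0) (by rw [b.ortho i n]; simp [hne])
    exact Set.Finite.subset (Set.finite_singleton n) this
  · have h1 : i = m := by
      by_contra h; exact hi (by rw [b.ortho i m]; simp [h])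
    have h2 : j = n := by
      by_contra h; exact hj (by rw [b.ortho j n]; simp [h])
    rw [h1, h2]; exact hmn

lemma aux_block_li {v : ℕ → X} (hv : b.IsBlockSequence v) : LinearIndependent ℝ v := by
  rw [linearIndependent_iff']
  intro s g hsum n hn
  obtain ⟨p, hp⟩ := aux_exists_coord_ne b (hv.1 n)
  have h0 := congrArg (b.coord p) hsum
  rw [map_sum, map_zero] at h0
  have hz : ∀ i ∈ s, i ≠ n → g i • b.coord p (v i) = 0 := by
    intro i _ hin
    have : b.coord p (v i) = 0 := by
      by_contra hc
      rcases lt_or_gt_of_ne hin with h | h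
      · exact lt_irrefl p (hv.2.2 i n p p h hc hp)
      · exact lt_irrefl p (hv.2.2 n i p p h hp hc)
    rw [this, smul_zero]
  have : ∑ i ∈ s, b.coord p (g i • v i) = g n • b.coord p (v n) := by
    rw [Finset.sum_congr rfl (fun i hi => map_smul _ _ _)]
    exact Finset.sum_eq_single_of_mem n hn hz
  rw [this] at h0
  rcases mul_eq_zero.1 h0 with h | h
  · exact h
  · exact absurd h hp

lemma aux_closedSpan_le {v y : ℕ → X} (h : ∀ m, y m ∈ closedSpan v) :
    closedSpan y ≤ closedSpan v := by
  refine Submodule.topologicalClosure_minimal _ ?_ (Submodule.isClosed_topologicalClosure _)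
  rw [Submodule.span_le]
  rintro _ ⟨m, rfl⟩
  exact h m

lemma aux_mem_closedSpan {v : ℕ → X} (m : ℕ) : v m ∈ closedSpan v :=
  Submodule.le_topologicalClosure _ (Submodule.subset_span ⟨m, rfl⟩)

lemma aux_not_fd {v : ℕ → X} (hv : b.IsBlockSequence v) :
    ¬ FiniteDimensional ℝ ↥(closedSpan v) := by
  intro hfd
  set Y := closedSpan v
  have li : LinearIndependent ℝ (fun n => (⟨v n, aux_mem_closedSpan n⟩ : Y)) := by
    have := aux_block_li b hv
    rw [linearIndependent_iff'] at this ⊢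
    intro s g hsum n hn
    refine this s g ?_ n hn
    have := congrArg (Y.subtype) hsum
    rw [map_sum, map_zero] at this
    simpa using this
  have hfin : Finite ℕ := li.finite
  exact absurd hfin (by rw [not_finite_iff_infinite]; infer_instance)

end Aux2

section Aux3

variable {X : Type*} [NormedAddCommGroup X] [NormedSpace ℝ X] (b : RealSchauderBasis X)

/-- escape lemma: a block sequence eventually has support above any N. -/
lemma aux_escape {v : ℕ → X} (hv : b.IsBlockSequence v) (N : ℕ) :
    ∃ m, ∀ i, i ≤ N → b.coord i (v m) = 0 := by
  choose s hs using fun n => aux_exists_coord_ne b (hv.1 n)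
  have hmono : StrictMono s := by
    intro m n hmn
    exact hv.2.2 m n (s m) (s n) hmn (hs m) (hs n)
  refine ⟨N + 1, fun i hi => ?_⟩
  by_contra hc
  have h1 : s N < i := hv.2.2 N (N + 1) (s N) i (Nat.lt_succ_self N) (hs N) hc
  have h2 : N ≤ s N := hmono.le_apply
  omega

/-- max of support -/
lemma aux_supp_max {x : X} (hfin : (b.supp x).Finite) (hx : x ≠ 0) :
    ∃ M, ∀ i, b.coord i x ≠ 0 → i ≤ M := by
  obtain ⟨i0, hi0⟩ := aux_exists_coord_ne b hx
  have hne : hfin.toFinset.Nonempty := ⟨i0, hfin.mem_toFinset.2 hi0⟩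
  refine ⟨hfin.toFinset.max' hne, fun i hi => ?_⟩
  exact Finset.le_max' _ i (hfin.mem_toFinset.2 hi)

/-- truncation: tails of elements of closedSpan z stay in the closed span of a tail of z. -/
lemma aux_trunc {z : ℕ → X} {k N : ℕ}
    (h1 : ∀ j, j < k → ∀ i, b.coord i (z j) ≠ 0 → i < N)
    (h2 : ∀ j, k ≤ j → ∀ i, i < N → b.coord i (z j) = 0) :
    ∀ u ∈ closedSpan z, u - QN b N u ∈ closedSpan (fun j => z (j + k)) := by
  set S := closedSpan (fun j => z (j + k))
  set f : X →L[ℝ] X := ContinuousLinearMap.id ℝ X - QN b N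
  have hf : ∀ u, f u = u - QN b N u := fun u => rfl
  have hcl : IsClosed ((Submodule.comap (f : X →ₗ[ℝ] X) S : Submodule ℝ X) : Set X) := by
    have : ((Submodule.comap (f : X →ₗ[ℝ] X) S : Submodule ℝ X) : Set X) = f ⁻¹' S := rfl
    rw [this]
    exact (Submodule.isClosed_topologicalClosure _).preimage f.continuous
  intro u hu
  have hle : closedSpan z ≤ Submodule.comap (f : X →ₗ[ℝ] X) S := by
    refine Submodule.topologicalClosure_minimal _ ?_ hcl
    rw [Submodule.span_le]
    rintro _ ⟨j, rfl⟩
    by_cases hj : j < k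
    · have : QN b N (z j) = z j := QN_eq_self b (h1 j hj)
      simp only [Submodule.mem_comap, SetLike.mem_coe]
      show f (z j) ∈ S
      rw [hf, this, sub_self]
      exact S.zero_mem
    · push_neg at hj
      have : QN b N (z j) = 0 := QN_eq_zero b (fun i hi => h2 j hj i hi)
      simp only [Submodule.mem_comap, SetLike.mem_coe]
      show f (z j) ∈ S
      rw [hf, this, sub_zero]
      have : z j = (fun j => z (j + k)) (j - k) := by
        simp [Nat.sub_add_cancel hj]
      rw [this]
      exact aux_mem_closedSpan _
  exact hle hu

/-- finite rank operators are compact -/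
lemma aux_fr_compact {E : Type*} [NormedAddCommGroup E] [NormedSpace ℝ E]
    (f : E →L[ℝ] X) (M : Submodule ℝ X) [FiniteDimensional ℝ M] (h : ∀ x, f x ∈ M) :
    IsCompactOperator f := by
  refine ⟨(↑) '' Metric.closedBall (0 : M) ‖f‖, ?_, ?_⟩
  · exact (isCompact_closedBall _ _).image continuous_subtype_val
  · refine Filter.mem_of_superset (Metric.closedBall_mem_nhds (0 : E) one_pos) ?_
    intro u hu
    refine ⟨⟨f u, h u⟩, ?_, rfl⟩
    rw [Metric.mem_closedBall, dist_zero_right] at hu ⊢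
    calc ‖(⟨f u, h u⟩ : M)‖ = ‖f u‖ := rfl
    _ ≤ ‖f‖ * ‖u‖ := f.le_opNorm u
    _ ≤ ‖f‖ * 1 := by nlinarith [norm_nonneg f]
    _ = ‖f‖ := mul_one _

lemma aux_QN_mem (N : ℕ) (x : X) :
    QN b N x ∈ Submodule.span ℝ (b.e '' (Set.Iio N)) := by
  rw [QN_apply]
  refine Submodule.sum_mem _ (fun i hi => ?_)
  exact Submodule.smul_mem _ _ (Submodule.subset_span ⟨i, Finset.mem_range.1 hi, rfl⟩)

end Aux3


set_option maxHeartbeats 1000000 in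
set_option synthInstance.maxHeartbeats 400000 in
/-- if a bounded diagonal operator D is, in every block subspace,
ε-close on a further block subspace to some multiple αε·Id with |αε| ≤ Λ, then
D − α₀·Id is compact on some infinite-dimensional block subspace. -/
theorem stmt6 {X : Type*} [NormedAddCommGroup X] [NormedSpace ℝ X] [CompleteSpace X]
    (b : RealSchauderBasis X) (hb : b.IsUnconditionalWith 1)
    (D : X →L[ℝ] X) (lam : ℕ → ℝ) (hD : ∀ i, D (b.e i) = lam i • b.e i)
    (Λ : ℝ) (hΛ : Λ = ⨆ n, |lam n|) (hΛpos : 0 < Λ)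
    (hyp : ∀ ε > (0 : ℝ), ∀ v : ℕ → X, b.IsBlockSequence v →
      ∃ y : ℕ → X, b.IsBlockSequence y ∧ (∀ m, y m ∈ closedSpan v) ∧
        ∃ α : ℝ, |α| ≤ Λ ∧ ∀ u ∈ closedSpan y, ‖D u - α • u‖ ≤ ε * ‖u‖) :
    ∃ (α₀ : ℝ) (y₀ : ℕ → X), b.IsBlockSequence y₀ ∧
      ¬ FiniteDimensional ℝ ↥(closedSpan y₀) ∧
      IsCompactOperator (fun u : ↥(closedSpan y₀) => D (u : X) - α₀ • (u : X)) := by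
  classical
  -- Step 1: recursive construction of nested block sequences
  have hyp' : ∀ (n : ℕ) (v : {v : ℕ → X // b.IsBlockSequence v}),
      ∃ y : {y : ℕ → X // b.IsBlockSequence y}, (∀ m, y.1 m ∈ closedSpan v.1) ∧
        ∃ α : ℝ, |α| ≤ Λ ∧ ∀ u ∈ closedSpan y.1, ‖D u - α • u‖ ≤ (2:ℝ)⁻¹ ^ n * ‖u‖ := by
    intro n v
    obtain ⟨y, hy, hmem, α, hα, hbound⟩ := hyp ((2:ℝ)⁻¹ ^ n) (by positivity) v.1 v.2
    exact ⟨⟨y, hy⟩, hmem, α, hα, hbound⟩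
  choose F hF al hal1 hal2 using hyp'
  let W : ℕ → {v : ℕ → X // b.IsBlockSequence v} :=
    fun n => Nat.rec (motive := fun _ => {v : ℕ → X // b.IsBlockSequence v})
      ⟨b.e, aux_e_block b⟩ (fun n w => F n w) n
  let V : ℕ → ℕ → X := fun n => (W n).1
  let A : ℕ → ℝ := fun n => al n (W n)
  have hVmem : ∀ n m, V (n + 1) m ∈ closedSpan (V n) := fun n m => hF n (W n) m
  have hA1 : ∀ n, |A n| ≤ Λ := fun n => hal1 n (W n)
  have hA2 : ∀ n, ∀ u ∈ closedSpan (V (n + 1)), ‖D u - A n • u‖ ≤ (2:ℝ)⁻¹ ^ n * ‖u‖ :=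
    fun n => hal2 n (W n)
  have hVblock : ∀ n, b.IsBlockSequence (V n) := fun n => (W n).2
  have hanti : ∀ m n, m ≤ n → closedSpan (V n) ≤ closedSpan (V m) :=
    fun m n h => antitone_nat_of_succ_le (f := fun n => closedSpan (V n))
      (fun n => aux_closedSpan_le (hVmem n)) h
  clear_value A V W
  -- Step 2: convergent subsequence of the α's
  obtain ⟨α₀, -, φ, hφ, hAφ⟩ := tendsto_subseq_of_bounded (Metric.isBounded_Icc (-Λ) Λ)
    (fun n => Set.mem_Icc.2 (abs_le.1 (hA1 n)))
  -- Step 3: diagonal block sequence z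
  have ex : ∀ (n N : ℕ), ∃ p : X × ℕ, p.1 ≠ 0 ∧ (b.supp p.1).Finite ∧
      p.1 ∈ closedSpan (V n) ∧ (∀ i, b.coord i p.1 ≠ 0 → N < i ∧ i ≤ p.2) ∧ N ≤ p.2 := by
    intro n N
    obtain ⟨m, hm⟩ := aux_escape b (hVblock n) N
    have hx0 : V n m ≠ 0 := (hVblock n).1 m
    have hfin : (b.supp (V n m)).Finite := (hVblock n).2.1 m
    obtain ⟨M, hM⟩ := aux_supp_max b hfin hx0
    refine ⟨(V n m, max N M), hx0, hfin, aux_mem_closedSpan m, fun i hi => ⟨?_, ?_⟩, le_max_left _ _⟩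
    · by_contra hle
      push_neg at hle
      exact hi (hm i hle)
    · exact le_max_of_le_right (hM i hi)
  choose G hG using ex
  let g : ℕ → X × ℕ := fun k => Nat.rec (motive := fun _ => X × ℕ)
    (G (φ 0 + 1) 0) (fun k p => G (φ (k + 1) + 1) p.2) k
  let z : ℕ → X := fun k => (g k).1
  let B : ℕ → ℕ := fun k => (g k).2
  have hz : ∀ k, z k ≠ 0 ∧ (b.supp (z k)).Finite ∧ z k ∈ closedSpan (V (φ k + 1)) ∧
      (∀ i, b.coord i (z k) ≠ 0 → i ≤ B k) := by
    intro k
    cases k with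
    | zero =>
      obtain ⟨h1, h2, h3, h4, -⟩ := hG (φ 0 + 1) 0
      exact ⟨h1, h2, h3, fun i hi => (h4 i hi).2⟩
    | succ k =>
      obtain ⟨h1, h2, h3, h4, -⟩ := hG (φ (k + 1) + 1) (B k)
      exact ⟨h1, h2, h3, fun i hi => (h4 i hi).2⟩
  have hzgt : ∀ k i, b.coord i (z (k + 1)) ≠ 0 → B k < i :=
    fun k i hi => ((hG (φ (k + 1) + 1) (B k)).2.2.2.1 i hi).1
  have hBmono : Monotone B := monotone_nat_of_le_succ (fun k => (hG (φ (k + 1) + 1) (B k)).2.2.2.2)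
  clear_value B z g
  have hzblock : b.IsBlockSequence z := by
    refine ⟨fun k => (hz k).1, fun k => (hz k).2.1, fun m n i j hmn hi hj => ?_⟩
    have hn1 : n - 1 + 1 = n := by omega
    have hj' : b.coord j (z (n - 1 + 1)) ≠ 0 := by rw [hn1]; exact hj
    have h1 : B (n - 1) < j := hzgt (n - 1) j hj'
    have h2 : i ≤ B m := (hz m).2.2.2 i hi
    have h3 : B m ≤ B (n - 1) := hBmono (by omega)
    omega
  -- Step 4: the tail estimate
  set Y₀ := closedSpan z with hY₀
  clear_value Y₀
  let Nk : ℕ → ℕ := fun k => if k = 0 then 0 else B (k - 1) + 1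
  have hNk1 : ∀ k, ∀ j, j < k → ∀ i, b.coord i (z j) ≠ 0 → i < Nk k := by
    intro k j hj i hi
    have h2 : i ≤ B j := (hz j).2.2.2 i hi
    have h3 : B j ≤ B (k - 1) := hBmono (by omega)
    have : Nk k = B (k - 1) + 1 := by simp only [Nk]; rw [if_neg (by omega : ¬ k = 0)]
    omega
  have hNk2 : ∀ k, ∀ j, k ≤ j → ∀ i, i < Nk k → b.coord i (z j) = 0 := by
    intro k j hj i hi
    by_cases hk : k = 0
    · subst hk; simp [Nk] at hi
    · have hNkk : Nk k = B (k - 1) + 1 := by simp [Nk, hk]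
      rw [hNkk] at hi
      by_contra hc
      have hj1 : j - 1 + 1 = j := by omega
      have hc' : b.coord i (z (j - 1 + 1)) ≠ 0 := by rw [hj1]; exact hc
      have h1 : B (j - 1) < i := hzgt (j - 1) i hc'
      have h2 : B (k - 1) ≤ B (j - 1) := hBmono (by omega)
      omega
  clear_value Nk
  let ε : ℕ → ℝ := fun k => (2:ℝ)⁻¹ ^ (φ k) + |A (φ k) - α₀|
  have hεlim : Tendsto ε atTop (𝓝 0) := by
    have h1 : Tendsto (fun k => (2:ℝ)⁻¹ ^ (φ k)) atTop (𝓝 0) :=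
      (tendsto_pow_atTop_nhds_zero_of_lt_one (by norm_num) (by norm_num)).comp hφ.tendsto_atTop
    have h2 : Tendsto (fun k => |A (φ k) - α₀|) atTop (𝓝 0) := by
      have := (hAφ.sub (tendsto_const_nhds (x := α₀))).abs
      simpa using this
    simpa only [add_zero] using h1.add h2
  have hεnn : ∀ k, 0 ≤ ε k := fun k => add_nonneg (by positivity) (abs_nonneg _)
  have htail : ∀ k, ∀ u ∈ Y₀, ‖D (u - QN b (Nk k) u) - α₀ • (u - QN b (Nk k) u)‖
      ≤ ε k * ‖u‖ := by
    intro k u hu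
    rw [hY₀] at hu
    set w := u - QN b (Nk k) u with hw
    have hwmem : w ∈ closedSpan (fun j => z (j + k)) :=
      aux_trunc b (hNk1 k) (hNk2 k) u hu
    have hsub : closedSpan (fun j => z (j + k)) ≤ closedSpan (V (φ k + 1)) := by
      refine aux_closedSpan_le (fun j => ?_)
      exact hanti _ _ (by have := hφ.monotone (Nat.le_add_left k j); omega) ((hz (j + k)).2.2.1)
    have hw2 : w ∈ closedSpan (V (φ k + 1)) := hsub hwmem
    have hb1 : ‖D w - A (φ k) • w‖ ≤ (2:ℝ)⁻¹ ^ (φ k) * ‖w‖ := hA2 (φ k) w hw2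
    have hb2 : ‖D w - α₀ • w‖ ≤ ((2:ℝ)⁻¹ ^ (φ k) + |A (φ k) - α₀|) * ‖w‖ := by
      have : D w - α₀ • w = (D w - A (φ k) • w) + (A (φ k) - α₀) • w := by
        rw [sub_smul]; abel
      rw [this]
      calc ‖(D w - A (φ k) • w) + (A (φ k) - α₀) • w‖
          ≤ ‖D w - A (φ k) • w‖ + ‖(A (φ k) - α₀) • w‖ := norm_add_le _ _
        _ ≤ (2:ℝ)⁻¹ ^ (φ k) * ‖w‖ + |A (φ k) - α₀| * ‖w‖ := by
            rw [norm_smul, Real.norm_eq_abs]; exact add_le_add hb1 (le_refl _)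
        _ = ((2:ℝ)⁻¹ ^ (φ k) + |A (φ k) - α₀|) * ‖w‖ := by ring
    have hwle : ‖w‖ ≤ ‖u‖ := QN_tail_norm_le b hb (Nk k) u
    calc ‖D w - α₀ • w‖ ≤ ((2:ℝ)⁻¹ ^ (φ k) + |A (φ k) - α₀|) * ‖w‖ := hb2
      _ ≤ ε k * ‖u‖ := mul_le_mul_of_nonneg_left hwle (hεnn k)
  clear_value ε
  -- Step 5: operators
  let T : ↥Y₀ →L[ℝ] X := (D - α₀ • ContinuousLinearMap.id ℝ X).comp Y₀.subtypeL
  let Tk : ℕ → (↥Y₀ →L[ℝ] X) := fun k =>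
    ((D - α₀ • ContinuousLinearMap.id ℝ X).comp (QN b (Nk k))).comp Y₀.subtypeL
  have hTkcompact : ∀ k, IsCompactOperator (Tk k) := by
    intro k
    have : FiniteDimensional ℝ (Submodule.span ℝ (b.e '' (Set.Iio (Nk k)))) :=
      FiniteDimensional.span_of_finite ℝ ((Set.finite_Iio _).image _)
    refine aux_fr_compact (Tk k)
      ((Submodule.span ℝ (b.e '' (Set.Iio (Nk k)))).map
        (D - α₀ • ContinuousLinearMap.id ℝ X : X →L[ℝ] X).toLinearMap) ?_
    intro u
    exact ⟨QN b (Nk k) (u : X), aux_QN_mem b (Nk k) (u : X), rfl⟩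
  have hTkT : ∀ k, ‖Tk k - T‖ ≤ ε k := by
    intro k
    refine ContinuousLinearMap.opNorm_le_bound _ (hεnn k) (fun u => ?_)
    have : (Tk k - T) u = -(D ((u : X) - QN b (Nk k) (u : X))
        - α₀ • ((u : X) - QN b (Nk k) (u : X))) := by
      simp only [Tk, T, ContinuousLinearMap.sub_apply, ContinuousLinearMap.comp_apply,
        ContinuousLinearMap.smul_apply, ContinuousLinearMap.id_apply, Submodule.subtypeL_apply,
        map_sub, smul_sub]
      abel
    rw [this, norm_neg]
    exact htail k (u : X) u.2
  have hT : Tendsto Tk atTop (𝓝 T) := by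
    refine (tendsto_iff_dist_tendsto_zero (f := Tk) (a := T)).mpr ?_
    refine squeeze_zero (fun k => dist_nonneg) (fun k => ?_) hεlim
    exact le_of_eq_of_le (dist_eq_norm (Tk k) T) (hTkT k)
  have hcompact : IsCompactOperator T :=
    isCompactOperator_of_tendsto hT (Filter.Eventually.of_forall hTkcompact)
  refine ⟨α₀, z, hzblock, aux_not_fd b hzblock, ?_⟩
  rw [← hY₀]
  have hfun : (fun u : ↥Y₀ => D (u : X) - α₀ • (u : X)) = ⇑T := by
    funext u
    simp [T, ContinuousLinearMap.sub_apply, ContinuousLinearMap.comp_apply,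
      ContinuousLinearMap.smul_apply, ContinuousLinearMap.id_apply]
  rw [hfun]
  exact hcompact
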